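/- Sufficient condition for regularity (spectral radius condition): Let A_c, Δ ∈ ℝ^{n×n} with Δ ≥ 0 entrywise. If A_c is invertible and the spectral radius of the nonnegative matrix |A_c^{-1}| Δ (where |A_c^{-1}| is the entrywise absolute value of A_c^{-1}) is strictly less than 1, then every real matrix A with |A − A_c| ≤ Δ entrywise is invertible. -/

import Mathlib

open scoped ENNReal NNReal

attribute [local instance] Matrix.linftyOpNormedRing Matrix.linftyOpNormedAlgebra

/-- Entrywise nonnegativity is preserved under matrix powers. -/
lemma pow_entry_nonneg {n : ℕ} {M : Matrix (Fin n) (Fin n) ℝ} (hM : ∀ i j, 0 ≤ M i j)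
    (k : ℕ) : ∀ i j, 0 ≤ (M ^ k) i j := by
  induction k with
  | zero => intro i j; by_cases h : i = j <;> simp [pow_zero, Matrix.one_apply, h]
  | succ k ih =>
    intro i j
    rw [pow_succ, Matrix.mul_apply]
    exact Finset.sum_nonneg fun l _ => mul_nonneg (ih i l) (hM l j)

/-- Sufficient condition for regularity: if `A_c` is invertible and the spectral
radius of `|A_c⁻¹| Δ` is less than `1` (i.e. every complex eigenvalue of this
matrix has modulus `< 1`), then every matrix in `[A_c - Δ, A_c + Δ]` is invertible. -/
theorem regular_of_spectralRadius_lt_one {n : ℕ} (Ac Δ : Matrix (Fin n) (Fin n) ℝ)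
    (hΔ : ∀ i j, 0 ≤ Δ i j) (hAc : IsUnit Ac)
    (hρ : ∀ μ ∈ spectrum ℂ ((((Ac⁻¹).map (fun r => |r|)) * Δ).map (Complex.ofReal)),
      ‖μ‖ < 1) :
    ∀ A : Matrix (Fin n) (Fin n) ℝ, (∀ i j, |A i j - Ac i j| ≤ Δ i j) → IsUnit A := by
  intro A hA
  rcases Nat.eq_zero_or_pos n with hn | hn
  · subst hn
    exact isUnit_of_subsingleton A
  haveI : Nonempty (Fin n) := ⟨⟨0, hn⟩⟩
  set M : Matrix (Fin n) (Fin n) ℝ := ((Ac⁻¹).map fun r => |r|) * Δ with hMdef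
  set Mc : Matrix (Fin n) (Fin n) ℂ := M.map Complex.ofReal with hMcdef
  have hMnn : ∀ i j, 0 ≤ M i j := by
    intro i j
    rw [hMdef, Matrix.mul_apply]
    exact Finset.sum_nonneg fun l _ => mul_nonneg (abs_nonneg _) (hΔ l j)
  -- the spectral radius of `Mc` is `< 1`
  haveI : Nontrivial (Matrix (Fin n) (Fin n) ℂ) := by
    refine ⟨0, 1, fun h => ?_⟩
    have := congrFun (congrFun h ⟨0, hn⟩) ⟨0, hn⟩
    simp [Matrix.one_apply] at this
  have hρ' : spectralRadius ℂ Mc < (1 : ℝ≥0) := by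
    refine spectrum.spectralRadius_lt_of_forall_lt Mc fun z hz => ?_
    have := hρ z hz
    simpa [← NNReal.coe_lt_coe, coe_nnnorm] using this
  -- find a power with small `L∞` operator norm
  obtain ⟨k, hk1, hk⟩ : ∃ k : ℕ, 1 ≤ k ∧ ‖Mc ^ k‖₊ < 1 := by
    have hG := spectrum.pow_nnnorm_pow_one_div_tendsto_nhds_spectralRadius Mc
    have hev : ∀ᶠ k : ℕ in Filter.atTop,
        ((‖Mc ^ k‖₊ : ℝ≥0∞) ^ (1 / (k : ℝ))) < 1 := by
      refine hG.eventually_lt_const ?_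
      simpa using hρ'
    obtain ⟨k, hklt, hk1⟩ := (hev.and (Filter.eventually_ge_atTop 1)).exists
    refine ⟨k, hk1, ?_⟩
    by_contra hge
    push_neg at hge
    have h1 : (1 : ℝ≥0∞) ≤ (‖Mc ^ k‖₊ : ℝ≥0∞) := by exact_mod_cast hge
    have : (1 : ℝ≥0∞) ≤ ((‖Mc ^ k‖₊ : ℝ≥0∞) ^ (1 / (k : ℝ))) := by
      calc (1 : ℝ≥0∞) = (1 : ℝ≥0∞) ^ (1 / (k : ℝ)) := by rw [ENNReal.one_rpow]
        _ ≤ _ := ENNReal.rpow_le_rpow h1 (by positivity)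
    exact absurd hklt (not_lt.mpr this)
  -- translate to row sums of `M ^ k`
  have hMck : Mc ^ k = (M ^ k).map Complex.ofReal := by
    have := map_pow (Complex.ofRealHom.mapMatrix) M k
    exact this.symm
  have hrow : ∀ i, ∑ j, (M ^ k) i j < 1 := by
    intro i
    have hle : (∑ j, ‖(Mc ^ k) i j‖₊) ≤ ‖Mc ^ k‖₊ := by
      rw [Matrix.linfty_opNNNorm_def]
      exact Finset.le_sup (f := fun i => ∑ j, ‖(Mc ^ k) i j‖₊) (Finset.mem_univ i)
    have hlt : (∑ j, ‖(Mc ^ k) i j‖₊) < 1 := lt_of_le_of_lt hle hk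
    have hcast : ∀ j, ((‖(Mc ^ k) i j‖₊ : ℝ)) = (M ^ k) i j := by
      intro j
      rw [hMck]
      simp [Matrix.map_apply, Complex.norm_real,
        abs_of_nonneg (pow_entry_nonneg hMnn k i j)]
    calc ∑ j, (M ^ k) i j = ∑ j, ((‖(Mc ^ k) i j‖₊ : ℝ)) := by
          exact Finset.sum_congr rfl fun j _ => (hcast j).symm
      _ = ((∑ j, ‖(Mc ^ k) i j‖₊ : ℝ≥0) : ℝ) := by push_cast; ring
      _ < 1 := by exact_mod_cast hlt
  -- now the main argument
  by_contra hAu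
  have hdet : A.det = 0 := by
    rw [Matrix.isUnit_iff_isUnit_det, isUnit_iff_ne_zero, not_ne_iff] at hAu
    exact hAu
  obtain ⟨x, hx0, hxA⟩ := Matrix.exists_mulVec_eq_zero_iff.mpr hdet
  set v : Fin n → ℝ := fun i => |x i| with hvdef
  have hvnn : ∀ i, 0 ≤ v i := fun i => abs_nonneg _
  have hinv : Ac⁻¹ * Ac = 1 := Matrix.nonsing_inv_mul Ac ((Matrix.isUnit_iff_isUnit_det Ac).mp hAc)
  -- key entrywise inequality `v ≤ M v`
  have key : ∀ i, v i ≤ ∑ j, M i j * v j := by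
    intro i
    have hx : x = -((Ac⁻¹).mulVec ((A - Ac).mulVec x)) := by
      have h1 : (A - Ac).mulVec x = -(Ac.mulVec x) := by
        rw [Matrix.sub_mulVec, hxA]
        simp
      rw [h1]
      simp [Matrix.mulVec_neg, Matrix.mulVec_mulVec, hinv]
    have : v i = |((Ac⁻¹).mulVec ((A - Ac).mulVec x)) i| := by
      conv_lhs => rw [hvdef]
      simp only []
      rw [show x i = (-((Ac⁻¹).mulVec ((A - Ac).mulVec x))) i from by rw [← hx]]
      simp [abs_neg]
    rw [this]
    calc |((Ac⁻¹).mulVec ((A - Ac).mulVec x)) i|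
        ≤ ∑ l, |Ac⁻¹ i l * ((A - Ac).mulVec x) l| := by
          rw [Matrix.mulVec, dotProduct]
          exact Finset.abs_sum_le_sum_abs _ _
      _ ≤ ∑ l, |Ac⁻¹ i l| * ∑ j, Δ l j * v j := by
          refine Finset.sum_le_sum fun l _ => ?_
          rw [abs_mul]
          refine mul_le_mul_of_nonneg_left ?_ (abs_nonneg _)
          calc |((A - Ac).mulVec x) l| ≤ ∑ j, |(A - Ac) l j * x j| := by
                rw [Matrix.mulVec, dotProduct]
                exact Finset.abs_sum_le_sum_abs _ _
            _ ≤ ∑ j, Δ l j * v j := by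
                refine Finset.sum_le_sum fun j _ => ?_
                rw [abs_mul]
                exact mul_le_mul_of_nonneg_right
                  (by simpa [Matrix.sub_apply] using hA l j) (abs_nonneg _)
      _ = ∑ j, M i j * v j := by
          rw [show (∑ l, |Ac⁻¹ i l| * ∑ j, Δ l j * v j)
              = ∑ l, ∑ j, |Ac⁻¹ i l| * (Δ l j * v j) from by
            exact Finset.sum_congr rfl fun l _ => by rw [Finset.mul_sum]]
          rw [Finset.sum_comm]
          simp only [hMdef, Matrix.mul_apply, Matrix.map_apply, Finset.sum_mul]
          exact Finset.sum_congr rfl fun j _ => Finset.sum_congr rfl fun l _ => by ring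
  -- iterate: `v ≤ M^k v`
  have keyk : ∀ m : ℕ, ∀ i, v i ≤ ∑ j, (M ^ m) i j * v j := by
    intro m
    induction m with
    | zero =>
      intro i
      simp [Matrix.one_apply]
    | succ m ih =>
      intro i
      calc v i ≤ ∑ l, M i l * v l := key i
        _ ≤ ∑ l, M i l * (∑ j, (M ^ m) l j * v j) := by
            refine Finset.sum_le_sum fun l _ => ?_
            exact mul_le_mul_of_nonneg_left (ih l) (hMnn i l)
        _ = ∑ j, (M ^ (m + 1)) i j * v j := by
            rw [show (∑ l, M i l * ∑ j, (M ^ m) l j * v j)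
                = ∑ l, ∑ j, M i l * ((M ^ m) l j * v j) from by
              exact Finset.sum_congr rfl fun l _ => by rw [Finset.mul_sum]]
            rw [Finset.sum_comm]
            simp only [pow_succ', Matrix.mul_apply, Finset.sum_mul]
            exact Finset.sum_congr rfl fun j _ => Finset.sum_congr rfl fun l _ => by ring
  -- reach a contradiction using the maximal entry of `v`
  obtain ⟨i0, -, hi0⟩ := Finset.exists_max_image Finset.univ v ⟨⟨0, hn⟩, Finset.mem_univ _⟩
  have hi0' : ∀ j, v j ≤ v i0 := fun j => hi0 j (Finset.mem_univ j)
  have hvpos : 0 < v i0 := by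
    obtain ⟨j, hj⟩ := Function.ne_iff.mp hx0
    exact lt_of_lt_of_le (abs_pos.mpr hj) (hi0' j)
  have hfinal : v i0 < v i0 := by
    calc v i0 ≤ ∑ j, (M ^ k) i0 j * v j := keyk k i0
      _ ≤ ∑ j, (M ^ k) i0 j * v i0 := by
          refine Finset.sum_le_sum fun j _ => ?_
          exact mul_le_mul_of_nonneg_left (hi0' j) (pow_entry_nonneg hMnn k i0 j)
      _ = (∑ j, (M ^ k) i0 j) * v i0 := by rw [Finset.sum_mul]
      _ < 1 * v i0 := by
          exact mul_lt_mul_of_pos_right (hrow i0) hvpos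
      _ = v i0 := one_mul _
  exact absurd hfinal (lt_irrefl _)
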